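/- Let 1 ≤ p < ∞, let Y be a Banach space with the Gelfand-Phillips property, and let M be a closed subspace of K_{w*}(X*, Y) (the w*-w continuous compact operators from X* to Y) such that for each y* ∈ Y*, the evaluation operator ψ_{y*}: M → X, T ↦ T*(y*), is limited p-convergent. Then M has the p-Gelfand-Phillips property: every limited weakly p-summable sequence in M is norm null. -/

import Mathlib

open Filter Topology Metric NormedSpace Bornology ENNReal

noncomputable section

section Defs
variable {X Y : Type*} [NormedAddCommGroup X] [NormedSpace ℝ X]
  [NormedAddCommGroup Y] [NormedSpace ℝ Y]

/-- A sequence `x` in `X` is weakly `p`-summable if `(f (x n))ₙ ∈ ℓ_p` for every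
continuous linear functional `f`. -/
def WeaklyPSummable (p : ℝ≥0∞) (x : ℕ → X) : Prop :=
  ∀ f : StrongDual ℝ X, Memℓp (fun n => f (x n)) p

/-- A sequence is norm null if its norms tend to `0`. -/
def NormNull (x : ℕ → X) : Prop :=
  Tendsto (fun n => ‖x n‖) atTop (𝓝 0)

/-- An operator is `p`-convergent if it maps weakly `p`-summable sequences to norm
null sequences. -/
def PConvergent (p : ℝ≥0∞) (T : X →L[ℝ] Y) : Prop :=
  ∀ x : ℕ → X, WeaklyPSummable p x → NormNull fun n => T (x n)

/-- The adjoint (dual) operator `T* : Y* → X*`, `g ↦ g ∘ T`. -/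
def adjOp (T : X →L[ℝ] Y) : StrongDual ℝ Y →L[ℝ] StrongDual ℝ X :=
  (ContinuousLinearMap.compL ℝ X Y ℝ).flip T

/-- Weak convergence of a sequence to a point. -/
def WeaklyConvTo (x : ℕ → X) (a : X) : Prop :=
  ∀ f : StrongDual ℝ X, Tendsto (fun n => f (x n)) atTop (𝓝 (f a))

/-- A sequence is weakly Cauchy if `(f (x n))` converges for every functional `f`. -/
def WeaklyCauchySeq (x : ℕ → X) : Prop :=
  ∀ f : StrongDual ℝ X, ∃ l : ℝ, Tendsto (fun n => f (x n)) atTop (𝓝 l)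

/-- A set is relatively weakly compact iff every sequence in it has a subsequence
weakly convergent to a point of the space (sequential form, by Eberlein–Šmulian). -/
def RelWeaklyCompact (A : Set X) : Prop :=
  ∀ x : ℕ → X, (∀ n, x n ∈ A) →
    ∃ (a : X) (φ : ℕ → ℕ), StrictMono φ ∧ WeaklyConvTo (fun k => x (φ k)) a

/-- A set is weakly precompact if every sequence in it has a weakly Cauchy subsequence. -/
def WeaklyPrecompact (A : Set X) : Prop :=
  ∀ x : ℕ → X, (∀ n, x n ∈ A) →
    ∃ φ : ℕ → ℕ, StrictMono φ ∧ WeaklyCauchySeq (fun k => x (φ k))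

/-- A weakly compact operator: the image of the closed unit ball is relatively
weakly compact. -/
def WeaklyCompactOp (T : X →L[ℝ] Y) : Prop :=
  RelWeaklyCompact (⇑T '' closedBall 0 1)

/-- A weakly precompact operator: the image of the closed unit ball is weakly
precompact. -/
def WeaklyPrecompactOp (T : X →L[ℝ] Y) : Prop :=
  WeaklyPrecompact (⇑T '' closedBall 0 1)

/-- `g n → 0` uniformly on `A`. -/
def UnifNullOn (g : ℕ → X → ℝ) (A : Set X) : Prop :=
  ∀ ε > (0 : ℝ), ∃ N, ∀ n ≥ N, ∀ a ∈ A, |g n a| ≤ ε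

/-- A weakly-`p`-Dunford-Pettis subset of `X`: bounded, and every weakly `p`-summable
sequence in `X*` tends to `0` uniformly on it. -/
def WeaklyPDP (p : ℝ≥0∞) (A : Set X) : Prop :=
  IsBounded A ∧
    ∀ f : ℕ → StrongDual ℝ X, WeaklyPSummable p f → UnifNullOn (fun n a => f n a) A

/-- A weakly-`p`-L-subset of `X*`: bounded, and every weakly `p`-summable sequence
in `X` tends to `0` uniformly on it. -/
def WeaklyPLSet (p : ℝ≥0∞) (A : Set (StrongDual ℝ X)) : Prop :=
  IsBounded A ∧
    ∀ x : ℕ → X, WeaklyPSummable p x → UnifNullOn (fun n g => g (x n)) A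

/-- A weakly-`p`-Cauchy sequence. -/
def WeaklyPCauchy (p : ℝ≥0∞) (x : ℕ → X) : Prop :=
  ∀ φ ψ : ℕ → ℕ, StrictMono φ → StrictMono ψ →
    WeaklyPSummable p fun k => x (φ k) - x (ψ k)

/-- A weakly-`p`-precompact set: every sequence in it has a weakly-`p`-Cauchy
subsequence. -/
def WeaklyPPrecompact (p : ℝ≥0∞) (A : Set X) : Prop :=
  ∀ x : ℕ → X, (∀ n, x n ∈ A) →
    ∃ φ : ℕ → ℕ, StrictMono φ ∧ WeaklyPCauchy p fun k => x (φ k)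

/-- A weakly-`p`-precompact operator. -/
def WeaklyPPrecompactOp (p : ℝ≥0∞) (T : X →L[ℝ] Y) : Prop :=
  WeaklyPPrecompact p (⇑T '' closedBall 0 1)

/-- A `w*`-null sequence of functionals. -/
def WStarNull (f : ℕ → StrongDual ℝ X) : Prop :=
  ∀ x : X, Tendsto (fun n => f n x) atTop (𝓝 0)

/-- A limited subset of `X`: every `w*`-null sequence in `X*` tends to `0`
uniformly on it. -/
def LimitedSet (A : Set X) : Prop :=
  ∀ f : ℕ → StrongDual ℝ X, WStarNull f → UnifNullOn (fun n a => f n a) A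

/-- A weakly unconditionally convergent (wuc) series. -/
def WUC (x : ℕ → X) : Prop :=
  ∀ f : StrongDual ℝ X, Summable fun n => |f (x n)|

/-- An unconditionally converging operator: maps wuc series to unconditionally
convergent series. -/
def UncondConverging (T : X →L[ℝ] Y) : Prop :=
  ∀ x : ℕ → X, WUC x → Summable fun n => T (x n)

/-- A `V*`-subset of `X`. -/
def VStarSet (A : Set X) : Prop :=
  IsBounded A ∧ ∀ f : ℕ → StrongDual ℝ X, WUC f → UnifNullOn (fun n a => f n a) A

/-- `w*`-to-`w` continuity of an operator `T : X* → Y`, in the equivalent algebraic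
form: for every `g ∈ Y*` the functional `g ∘ T` on `X*` is given by evaluation at
a point of `X`. -/
def WStarToWCont (T : StrongDual ℝ X →L[ℝ] Y) : Prop :=
  ∀ g : StrongDual ℝ Y, ∃ x : X, ∀ f : StrongDual ℝ X, g (T f) = f x

end Defs

section SpaceProps
variable (p : ℝ≥0∞) (X : Type*) [NormedAddCommGroup X] [NormedSpace ℝ X]

/-- The Gelfand-Phillips property: every limited subset is relatively compact. -/
def GPspace : Prop :=
  ∀ A : Set X, Bornology.IsBounded A → LimitedSet A → IsCompact (closure A)

/-- The `p`-Gelfand-Phillips property: every limited weakly `p`-summable sequence is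
norm null. -/
def pGP : Prop :=
  ∀ x : ℕ → X, LimitedSet (Set.range x) → WeaklyPSummable p x → NormNull x

/-- Property `RDP_p`: every weakly-`p`-L-subset of `X*` is relatively weakly compact. -/
def RDPp : Prop :=
  ∀ A : Set (StrongDual ℝ X), WeaklyPLSet p A → RelWeaklyCompact A

/-- The Schur property. -/
def SchurSpace : Prop :=
  ∀ (x : ℕ → X) (a : X), WeaklyConvTo x a → Tendsto x atTop (𝓝 a)

/-- Weak sequential completeness. -/
def WeaklySeqComplete : Prop :=
  ∀ x : ℕ → X, WeaklyCauchySeq x → ∃ a : X, WeaklyConvTo x a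

/-- Pełczyński's property (V). -/
def PropertyV : Prop :=
  ∀ (Y : Type) [NormedAddCommGroup Y] [NormedSpace ℝ Y] [CompleteSpace Y],
    ∀ T : X →L[ℝ] Y, UncondConverging T → WeaklyCompactOp T

/-- Property (V*). -/
def PropertyVStar : Prop :=
  ∀ A : Set X, VStarSet A → RelWeaklyCompact A

/-- Reflexivity of a normed space: the canonical embedding into the double dual is
surjective. -/
def ReflexiveSpace : Prop :=
  Function.Surjective (NormedSpace.inclusionInDoubleDual ℝ X)

end SpaceProps

section Embeds
/-- `Z` embeds isomorphically into `W`. -/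
def EmbedsIn (Z W : Type*) [NormedAddCommGroup Z] [NormedSpace ℝ Z]
    [NormedAddCommGroup W] [NormedSpace ℝ W] : Prop :=
  ∃ f : Z →L[ℝ] W, ∃ c > (0 : ℝ), ∀ z : Z, c * ‖z‖ ≤ ‖f z‖

end Embeds
/-- Instances on submodules of `StrongDual ℝ X →L[ℝ] Y` (found automatically by the older Mathlib). -/
noncomputable instance instNormedAddCommGroupSubmoduleDualCLM {X Y : Type*}
    [NormedAddCommGroup X] [NormedSpace ℝ X] [NormedAddCommGroup Y] [NormedSpace ℝ Y]
    (M : Submodule ℝ (StrongDual ℝ X →L[ℝ] Y)) : NormedAddCommGroup M :=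
  @Submodule.normedAddCommGroup ℝ (StrongDual ℝ X →L[ℝ] Y) _ ContinuousLinearMap.toNormedAddCommGroup
    ContinuousLinearMap.module M

noncomputable instance instNormedSpaceSubmoduleDualCLM {X Y : Type*}
    [NormedAddCommGroup X] [NormedSpace ℝ X] [NormedAddCommGroup Y] [NormedSpace ℝ Y]
    (M : Submodule ℝ (StrongDual ℝ X →L[ℝ] Y)) : NormedSpace ℝ M :=
  @Submodule.normedSpace ℝ ℝ _ _ _ (StrongDual ℝ X →L[ℝ] Y) ContinuousLinearMap.toSeminormedAddCommGroup
    ContinuousLinearMap.toNormedSpace ContinuousLinearMap.module _ M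

-- AUX 1: subsequence of weakly p-summable
lemma wps_comp_injective {Z : Type*} [NormedAddCommGroup Z] [NormedSpace ℝ Z]
    {p : ℝ≥0∞} (hp : 1 ≤ p) (hp' : p ≠ ⊤) {x : ℕ → Z}
    (h : WeaklyPSummable p x) {φ : ℕ → ℕ} (hφ : Function.Injective φ) :
    WeaklyPSummable p (fun k => x (φ k)) := by
  have hr : 0 < p.toReal := ENNReal.toReal_pos (fun h0 => by simp [h0] at hp) hp'
  intro f
  have := (memℓp_gen_iff hr).1 (h f)
  exact memℓp_gen ((this.comp_injective hφ))

-- AUX 2: weakly p-summable implies weakly null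
lemma wps_tendsto_zero {Z : Type*} [NormedAddCommGroup Z] [NormedSpace ℝ Z]
    {p : ℝ≥0∞} (hp : 1 ≤ p) (hp' : p ≠ ⊤) {x : ℕ → Z}
    (h : WeaklyPSummable p x) (f : StrongDual ℝ Z) :
    Tendsto (fun n => f (x n)) atTop (𝓝 0) := by
  have hr : 0 < p.toReal := ENNReal.toReal_pos (fun h0 => by simp [h0] at hp) hp'
  have hs : Summable fun n => ‖f (x n)‖ ^ p.toReal := (memℓp_gen_iff hr).1 (h f)
  have ht := hs.tendsto_atTop_zero
  have hc : ContinuousAt (fun t : ℝ => t ^ (1 / p.toReal)) 0 :=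
    Real.continuousAt_rpow_const 0 (1 / p.toReal) (Or.inr (by positivity))
  have h2 : Tendsto (fun n => (‖f (x n)‖ ^ p.toReal) ^ (1 / p.toReal)) atTop (𝓝 0) := by
    have h0 : (0:ℝ) ^ (1 / p.toReal) = 0 := Real.zero_rpow (by positivity)
    have h4 := hc.tendsto.comp ht
    simp only [Function.comp_def, h0] at h4
    exact h4
  have h3 : Tendsto (fun n => ‖f (x n)‖) atTop (𝓝 0) := by
    refine h2.congr fun n => ?_
    rw [← Real.rpow_mul (norm_nonneg _), mul_one_div, div_self hr.ne', Real.rpow_one]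
  exact tendsto_zero_iff_norm_tendsto_zero.2 h3

-- AUX 3: a pointwise null sequence of functionals is bounded
lemma dual_seq_bound {Z : Type*} [NormedAddCommGroup Z] [NormedSpace ℝ Z] [CompleteSpace Z]
    (g : ℕ → StrongDual ℝ Z) (hg : ∀ z : Z, Tendsto (fun n => g n z) atTop (𝓝 0)) :
    ∃ C : ℝ, 0 ≤ C ∧ ∀ n, ‖g n‖ ≤ C := by
  obtain ⟨C, hC⟩ := banach_steinhaus (g := g) (fun z => by
    obtain ⟨c, hc⟩ := ((hg z).norm.bddAbove_range)
    exact ⟨c, fun i => hc (Set.mem_range_self i)⟩)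
  exact ⟨C, le_trans (norm_nonneg _) (hC 0), hC⟩

-- AUX 4: a weakly null sequence is norm bounded
lemma weakly_null_bound {Z : Type*} [NormedAddCommGroup Z] [NormedSpace ℝ Z]
    (x : ℕ → Z) (hx : ∀ f : StrongDual ℝ Z, Tendsto (fun n => f (x n)) atTop (𝓝 0)) :
    ∃ C : ℝ, ∀ n, ‖x n‖ ≤ C := by
  obtain ⟨C, -, hC⟩ := dual_seq_bound (fun n => NormedSpace.inclusionInDoubleDual ℝ Z (x n))
    (fun f => by simpa using hx f)
  refine ⟨C, fun n => ?_⟩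
  have := (NormedSpace.inclusionInDoubleDualLi ℝ (E := Z)).norm_map (x n)
  rw [← this]
  exact hC n

-- AUX 5: key null lemma using compactness
lemma compact_eval_null {X Y : Type*} [NormedAddCommGroup X] [NormedSpace ℝ X]
    [NormedAddCommGroup Y] [NormedSpace ℝ Y] [CompleteSpace Y]
    (m : StrongDual ℝ X →L[ℝ] Y) (hm : IsCompactOperator m)
    (g : ℕ → StrongDual ℝ Y) (hg : WStarNull g) (κ : ℕ → ℕ) (hκ : Tendsto κ atTop atTop)
    (f : ℕ → StrongDual ℝ X) (hf : ∀ j, ‖f j‖ ≤ 1) :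
    Tendsto (fun j => g (κ j) (m (f j))) atTop (𝓝 0) := by
  obtain ⟨C, hC0, hC⟩ := dual_seq_bound g hg
  obtain ⟨K, hK, hKs⟩ :=
    IsCompactOperator.image_closedBall_subset_compact (f := (m : StrongDual ℝ X →ₗ[ℝ] Y)) hm 1
  apply tendsto_of_subseq_tendsto
  intro ns hns
  have hz : ∀ l : ℕ, m (f (ns l)) ∈ K := fun l =>
    hKs ⟨f (ns l), by simpa [Metric.mem_closedBall] using hf (ns l), rfl⟩
  obtain ⟨a, _, ms, hms, hmt⟩ := hK.tendsto_subseq hz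
  refine ⟨ms, ?_⟩
  have hκ' : Tendsto (fun l => κ (ns (ms l))) atTop atTop :=
    hκ.comp (hns.comp hms.tendsto_atTop)
  have h1 : Tendsto (fun l => g (κ (ns (ms l))) a) atTop (𝓝 0) := (hg a).comp hκ'
  have h2 : Tendsto (fun l => g (κ (ns (ms l))) (m (f (ns (ms l)))) -
      g (κ (ns (ms l))) a) atTop (𝓝 0) := by
    apply squeeze_zero_norm (a := fun l => C * ‖m (f (ns (ms l))) - a‖)
    · intro l
      rw [← map_sub]
      calc ‖g (κ (ns (ms l))) (m (f (ns (ms l))) - a)‖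
          ≤ ‖g (κ (ns (ms l)))‖ * ‖m (f (ns (ms l))) - a‖ :=
            (g _).le_opNorm _
        _ ≤ C * ‖m (f (ns (ms l))) - a‖ :=
            mul_le_mul_of_nonneg_right (hC _) (norm_nonneg _)
    · have : Tendsto (fun l => ‖m (f (ns (ms l))) - a‖) atTop (𝓝 0) := by
        simpa [Function.comp_def] using tendsto_iff_norm_sub_tendsto_zero.1 hmt
      simpa using this.const_mul C
  have := h2.add h1
  simpa using this

set_option synthInstance.maxHeartbeats 1000000 in
set_option maxHeartbeats 2000000 in
/-- Let `1 ≤ p < ∞`, let `Y` have the Gelfand-Phillips property, and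
let `M` be a closed subspace of `K_{w*}(X*, Y)` such that for each `y* ∈ Y*` the
evaluation operator `ψ_{y*} : M → X`, `T ↦ T*(y*)` (given by the representation
`x* (ψ_{y*} T) = y* (T x*)`), is limited `p`-convergent. Then `M` has the
`p`-Gelfand-Phillips property. -/
theorem stmt_16 {X Y : Type*} [NormedAddCommGroup X] [NormedSpace ℝ X] [CompleteSpace X]
    [NormedAddCommGroup Y] [NormedSpace ℝ Y] [CompleteSpace Y]
    (p : ℝ≥0∞) (hp : 1 ≤ p) (hp' : p ≠ ⊤)
    (hY : GPspace Y)
    (M : Submodule ℝ (StrongDual ℝ X →L[ℝ] Y)) (hMc : IsClosed (M : Set (StrongDual ℝ X →L[ℝ] Y)))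
    (hM : ∀ T ∈ M, WStarToWCont T ∧ IsCompactOperator T)
    (hev : ∀ g : StrongDual ℝ Y, ∀ Tn : ℕ → ↥M, LimitedSet (Set.range Tn) →
      WeaklyPSummable p Tn →
      ∀ x : ℕ → X, (∀ (n : ℕ) (f : StrongDual ℝ X), g ((Tn n : StrongDual ℝ X →L[ℝ] Y) f) = f (x n)) →
        NormNull x) :
    pGP p ↥M := by
  intro T hlim hwps
  by_contra hnot
  unfold NormNull at hnot
  rw [Metric.tendsto_atTop] at hnot
  push_neg at hnot
  obtain ⟨ε, hε, hfreq⟩ := hnot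
  have hfr : ∃ᶠ n in atTop, ε ≤ ‖T n‖ := by
    rw [frequently_atTop]
    intro N
    obtain ⟨n, hn, h⟩ := hfreq N
    refine ⟨n, hn, ?_⟩
    rw [Real.dist_eq, sub_zero, abs_of_nonneg (norm_nonneg _)] at h
    exact h
  obtain ⟨φ, hφ, hφε⟩ := Filter.extraction_of_frequently_atTop hfr
  set S : ℕ → ↥M := fun k => T (φ k) with hSdef
  have hSlim : LimitedSet (Set.range S) := by
    intro g hg ε' hε'
    obtain ⟨N, hN⟩ := hlim g hg ε' hε'
    exact ⟨N, fun n hn a ha => hN n hn a (by obtain ⟨k, rfl⟩ := ha; exact ⟨φ k, rfl⟩)⟩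
  have hSwps : WeaklyPSummable p S := wps_comp_injective hp hp' hwps hφ.injective
  have hex : ∀ k, ∃ f : StrongDual ℝ X, ‖f‖ ≤ 1 ∧ ε / 2 < ‖(S k : StrongDual ℝ X →L[ℝ] Y) f‖ := by
    intro k
    have h1 : ε / 2 < ‖(S k : StrongDual ℝ X →L[ℝ] Y)‖ :=
      lt_of_lt_of_le (by linarith) (hφε k)
    obtain ⟨f, hf1, hf2⟩ :=
      ContinuousLinearMap.exists_lt_apply_of_lt_opNorm (S k : StrongDual ℝ X →L[ℝ] Y) h1
    exact ⟨f, hf1.le, hf2⟩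
  choose f hf1 hf2 using hex
  set y : ℕ → Y := fun k => (S k : StrongDual ℝ X →L[ℝ] Y) (f k) with hydef
  have hynull : ∀ g : StrongDual ℝ Y, Tendsto (fun k => g (y k)) atTop (𝓝 0) := by
    intro g
    choose x hx using fun k => (hM (S k) (S k).2).1 g
    have hnn : NormNull x := hev g S hSlim hSwps x (fun n f' => hx n f')
    apply squeeze_zero_norm (a := fun k => ‖x k‖) _ hnn
    intro k
    rw [show g (y k) = (f k) (x k) from hx k (f k)]
    calc ‖(f k) (x k)‖ ≤ ‖f k‖ * ‖x k‖ := (f k).le_opNorm _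
      _ ≤ 1 * ‖x k‖ := mul_le_mul_of_nonneg_right (hf1 k) (norm_nonneg _)
      _ = ‖x k‖ := one_mul _
  have hylim : LimitedSet (Set.range y) := by
    intro g hg
    by_contra hcon
    unfold UnifNullOn at hcon
    push_neg at hcon
    obtain ⟨δ, hδ, hcon⟩ := hcon
    have hfr2 : ∃ᶠ k in atTop, ∃ j, δ < |g k (y j)| := by
      rw [frequently_atTop]
      intro N
      obtain ⟨k, hk, a, ⟨j, rfl⟩, hja⟩ := hcon N
      exact ⟨k, hk, j, hja⟩
    obtain ⟨κ, hκmono, hκ⟩ := Filter.extraction_of_frequently_atTop hfr2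
    choose nj hnj using hκ
    set χ : ℕ → StrongDual ℝ ↥M := fun j =>
      (g (κ j)).comp ((ContinuousLinearMap.apply ℝ Y (f (nj j))).comp M.subtypeL) with hχdef
    have hχ : WStarNull (X := ↥M) χ := by
      intro m
      have hcn := compact_eval_null (m : StrongDual ℝ X →L[ℝ] Y) (hM m m.2).2 g hg κ
        hκmono.tendsto_atTop (fun j => f (nj j)) (fun j => hf1 (nj j))
      simpa [hχdef] using hcn
    obtain ⟨N, hN⟩ := hSlim χ hχ δ hδ
    have h1 := hN N le_rfl (S (nj N)) ⟨nj N, rfl⟩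
    have h2 : |g (κ N) (y (nj N))| ≤ δ := by simpa [hχdef, hydef] using h1
    exact absurd h2 (not_le.2 (hnj N))
  obtain ⟨C, hC⟩ := weakly_null_bound y hynull
  have hyb : Bornology.IsBounded (Set.range y) :=
    isBounded_iff_forall_norm_le.2 ⟨C, by rintro _ ⟨k, rfl⟩; exact hC k⟩
  have hcomp := hY (Set.range y) hyb hylim
  have hmem : ∀ k, y k ∈ closure (Set.range y) := fun k => subset_closure ⟨k, rfl⟩
  obtain ⟨a, -, ψ, hψ, hψt⟩ := hcomp.tendsto_subseq hmem
  have ha : a = 0 := by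
    apply NormedSpace.eq_zero_of_forall_dual_eq_zero ℝ
    intro g
    have h1 : Tendsto (fun l => g (y (ψ l))) atTop (𝓝 (g a)) :=
      (g.continuous.tendsto a).comp hψt
    have h2 : Tendsto (fun l => g (y (ψ l))) atTop (𝓝 0) :=
      (hynull g).comp hψ.tendsto_atTop
    exact tendsto_nhds_unique h1 h2
  rw [ha] at hψt
  have hnrm : Tendsto (fun l => ‖y (ψ l)‖) atTop (𝓝 0) := by
    simpa [Function.comp_def] using hψt.norm
  have hev' : ∀ᶠ l in atTop, ‖y (ψ l)‖ < ε / 2 :=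
    hnrm.eventually (Filter.eventually_mem_set.2 (Iio_mem_nhds (half_pos hε)))
  obtain ⟨l, hl⟩ := hev'.exists
  exact absurd hl (not_lt.2 (hf2 (ψ l)).le)
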